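/- Let F̂ ∈ ℝ^{d×n}, let Γ ∈ ℝ^{n×n} be symmetric positive semidefinite with symmetric positive semidefinite square root Γ^{1/2} (so Γ = Γ^{1/2} Γ^{1/2}), and set H_d = F̂ Γ F̂ᵀ ∈ ℝ^{d×d}. Let H_d = Σ_{i=1}^d λ_i u_i u_iᵀ be a spectral decomposition with orthonormal eigenvectors u_1, …, u_d and eigenvalues λ_1 ≥ λ_2 ≥ ⋯ ≥ λ_d ≥ 0, and for 1 ≤ k ≤ d define the rank-k truncation Ĥ_d = Σ_{i=1}^k λ_i u_i u_iᵀ. Let W ∈ ℝ^{r×d} be a design matrix. Define Ψ(W) = (1/2) log det(I_n + Γ^{1/2} F̂ᵀ Wᵀ W F̂ Γ^{1/2}) and Ψ̂(W) = (1/2) log det(I_r + W Ĥ_d Wᵀ). Then 0 ≤ Ψ(W) − Ψ̂(W) ≤ (1/2) Σ_{i=k+1}^d log(1 + λ_i). -/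

import Mathlib

open Matrix Finset
open scoped MatrixOrder

section Aux

variable {ι : Type*} [Fintype ι] [DecidableEq ι]

lemma aux_one_le_det {A : Matrix ι ι ℝ} (hA : A.PosSemidef) : 1 ≤ (1 + A).det := by
  have h1 : (1 + A).PosSemidef := Matrix.PosSemidef.add Matrix.PosSemidef.one hA
  have hH := h1.1
  rw [Matrix.IsHermitian.det_eq_prod_eigenvalues hH]
  have hev : ∀ i, 1 ≤ hH.eigenvalues i := by
    intro i
    set v := ⇑(hH.eigenvectorBasis i) with hv
    have hμ : (1 + A) *ᵥ v = hH.eigenvalues i • v := hH.mulVec_eigenvectorBasis i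
    have hAv : A *ᵥ v = (hH.eigenvalues i - 1) • v := by
      rw [add_mulVec, one_mulVec] at hμ
      rw [sub_smul, one_smul, ← hμ]
      abel
    have h0 : (0:ℝ) ≤ star v ⬝ᵥ (A *ᵥ v) := hA.dotProduct_mulVec_nonneg v
    rw [hAv, dotProduct_smul] at h0
    have hvne : v ≠ 0 := by
      intro h
      exact hH.eigenvectorBasis.orthonormal.ne_zero i (by ext j; exact congrFun h j)
    have hvpos : 0 < star v ⬝ᵥ v := dotProduct_star_self_pos_iff.mpr hvne
    rw [smul_eq_mul] at h0
    nlinarith [h0, hvpos]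
  have : ∀ i ∈ Finset.univ, (1:ℝ) ≤ (hH.eigenvalues i : ℝ) := fun i _ => hev i
  calc (1:ℝ) = ∏ _i : ι, 1 := by simp
    _ ≤ ∏ i, (hH.eigenvalues i : ℝ) := Finset.prod_le_prod (by simp) (by simpa using this)

lemma aux_det_one_add_pos {A : Matrix ι ι ℝ} (hA : A.PosSemidef) : 0 < (1 + A).det :=
  zero_lt_one.trans_le (aux_one_le_det hA)

lemma aux_factor {A B : Matrix ι ι ℝ} (hA : A.PosSemidef) (hB : B.PosSemidef) :
    ∃ X : Matrix ι ι ℝ, X.PosSemidef ∧ (B - X).PosSemidef ∧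
      (1 + A + B).det = (1 + A).det * (1 + X).det := by
  set P : Matrix ι ι ℝ := 1 + A with hPdef
  have hP : P.PosDef := Matrix.PosDef.add_posSemidef Matrix.PosDef.one hA
  have hPunit : IsUnit P.det := hP.det_pos.ne'.isUnit
  have hPinv : P * P⁻¹ = 1 := Matrix.mul_nonsing_inv P hPunit
  have hPinvP : P⁻¹ * P = 1 := Matrix.nonsing_inv_mul P hPunit
  have hPinvH : P⁻¹ᴴ = P⁻¹ := hP.inv.isHermitian
  set S : Matrix ι ι ℝ := CFC.sqrt B with hSdef
  have hSpsd : S.PosSemidef := nonneg_iff_posSemidef.mp (CFC.sqrt_nonneg B)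
  have hSS : S * S = B := CFC.sqrt_mul_sqrt_self B (nonneg_iff_posSemidef.mpr hB)
  have hSH : Sᴴ = S := hSpsd.1
  refine ⟨S * P⁻¹ * S, ?_, ?_, ?_⟩
  · have := (hP.inv.posSemidef).mul_mul_conjTranspose_same S
    rwa [hSH] at this
  · -- B - S * P⁻¹ * S = S * (1 - P⁻¹) * S
    have h1 : (1 : Matrix ι ι ℝ) - P⁻¹ = P⁻¹ * (A + A * A) * P⁻¹ := by
      have hAP : A + A * A = A * P := by rw [hPdef, mul_add, mul_one]
      have hA' : A = P - 1 := by rw [hPdef]; abel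
      rw [hAP, ← Matrix.mul_assoc, Matrix.mul_assoc (P⁻¹ * A) P P⁻¹, hPinv, Matrix.mul_one,
        hA', Matrix.mul_sub, hPinvP, Matrix.mul_one]
    have hmid : ((1 : Matrix ι ι ℝ) - P⁻¹).PosSemidef := by
      rw [h1]
      have hAA : (A + A * A).PosSemidef := by
        have := hA.pow 2
        rw [pow_two] at this
        exact hA.add this
      have := hAA.mul_mul_conjTranspose_same P⁻¹
      rwa [hPinvH] at this
    have heq : B - S * P⁻¹ * S = S * ((1 : Matrix ι ι ℝ) - P⁻¹) * S := by
      rw [Matrix.mul_sub, Matrix.sub_mul, Matrix.mul_one, hSS]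
    rw [heq]
    have := hmid.mul_mul_conjTranspose_same S
    rwa [hSH] at this
  · -- det identity
    have hfac : 1 + A + B = P * (1 + P⁻¹ * S * S) := by
      rw [Matrix.mul_add, Matrix.mul_one, hPdef]
      congr 1
      rw [← Matrix.mul_assoc, ← Matrix.mul_assoc, hPinv, Matrix.one_mul, hSS]
    rw [hfac, Matrix.det_mul]
    congr 1
    rw [Matrix.det_one_add_mul_comm (P⁻¹ * S) S, ← Matrix.mul_assoc]

lemma aux_mono {A B : Matrix ι ι ℝ} (hA : A.PosSemidef) (hB : B.PosSemidef) :
    (1 + A).det ≤ (1 + A + B).det := by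
  obtain ⟨X, hX, _, heq⟩ := aux_factor hA hB
  rw [heq]
  exact le_mul_of_one_le_right (aux_det_one_add_pos hA).le (aux_one_le_det hX)

lemma aux_prod {A B : Matrix ι ι ℝ} (hA : A.PosSemidef) (hB : B.PosSemidef) :
    (1 + A + B).det ≤ (1 + A).det * (1 + B).det := by
  obtain ⟨X, hX, hBX, heq⟩ := aux_factor hA hB
  rw [heq]
  have h2 : (1 + X).det ≤ (1 + B).det := by
    have := aux_mono hX hBX
    rwa [show 1 + X + (B - X) = 1 + B by abel] at this
  exact mul_le_mul_of_nonneg_left h2 (aux_det_one_add_pos hA).le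

lemma aux_psd_smul_vecMulVec (c : ℝ) (hc : 0 ≤ c) (w : ι → ℝ) :
    (c • vecMulVec w w).PosSemidef := by
  refine .of_dotProduct_mulVec_nonneg ?_ ?_
  · ext i j
    simp [Matrix.conjTranspose_apply, Matrix.vecMulVec_apply, mul_comm]
  · intro x
    have h1 : (c • vecMulVec w w) *ᵥ x = (c * (w ⬝ᵥ x)) • w := by
      ext j
      simp only [Matrix.mulVec, dotProduct, Pi.smul_apply, smul_eq_mul,
        Matrix.smul_apply, Matrix.vecMulVec_apply, Finset.mul_sum, Finset.sum_mul]
      exact Finset.sum_congr rfl fun l _ => by ring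
    rw [h1]
    have h2 : star x ⬝ᵥ ((c * (w ⬝ᵥ x)) • w) = c * ((w ⬝ᵥ x) * (x ⬝ᵥ w)) := by
      rw [dotProduct_smul, smul_eq_mul, star_trivial, mul_assoc]
    rw [h2, dotProduct_comm x w]
    exact mul_nonneg hc (mul_self_nonneg _)

lemma aux_psd_sum {s : Finset (Fin d)} (lam : Fin d → ℝ) (h : ∀ i, 0 ≤ lam i)
    (u : Fin d → (Fin d → ℝ)) :
    (∑ i ∈ s, lam i • vecMulVec (u i) (u i)).PosSemidef := by
  classical
  refine Finset.sum_induction _ _ (fun a b ha hb => ha.add hb) Matrix.PosSemidef.zero ?_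
  exact fun i _ => aux_psd_smul_vecMulVec (lam i) (h i) (u i)

end Aux

/-- Low-rank approximation error bound for the expected information gain:
`0 ≤ Ψ(W) - Ψ̂(W) ≤ (1/2) ∑_{i ≥ k} log (1 + λ_i)`. -/
theorem stmt_1 {d n r : ℕ} (F : Matrix (Fin d) (Fin n) ℝ)
    (Γ Γh : Matrix (Fin n) (Fin n) ℝ)
    (hΓ : Γ.PosSemidef) (hΓh : Γh.PosSemidef) (hΓsq : Γ = Γh * Γh)
    (lam : Fin d → ℝ) (u : Fin d → (Fin d → ℝ))
    (h_orth : ∀ i j, u i ⬝ᵥ u j = if i = j then 1 else 0)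
    (h_decay : ∀ i j : Fin d, i ≤ j → lam j ≤ lam i)
    (h_nonneg : ∀ i, 0 ≤ lam i)
    (h_spec : F * Γ * Fᵀ = ∑ i, lam i • vecMulVec (u i) (u i))
    (k : ℕ) (hk1 : 1 ≤ k) (hkd : k ≤ d)
    (W : Matrix (Fin r) (Fin d) ℝ)
    (hW01 : ∀ i j, W i j = 0 ∨ W i j = 1)
    (hWrow : ∀ i, ∑ j, W i j = 1)
    (hWcol : ∀ j, (∑ i, W i j) = 0 ∨ (∑ i, W i j) = 1) :
    0 ≤ (1 / 2) * Real.log (1 + Γh * Fᵀ * Wᵀ * W * F * Γh).det -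
        (1 / 2) * Real.log
          (1 + W * (∑ i ∈ univ.filter fun i : Fin d => (i : ℕ) < k,
              lam i • vecMulVec (u i) (u i)) * Wᵀ).det ∧
    (1 / 2) * Real.log (1 + Γh * Fᵀ * Wᵀ * W * F * Γh).det -
        (1 / 2) * Real.log
          (1 + W * (∑ i ∈ univ.filter fun i : Fin d => (i : ℕ) < k,
              lam i • vecMulVec (u i) (u i)) * Wᵀ).det ≤
      (1 / 2) * ∑ i ∈ univ.filter fun i : Fin d => k ≤ (i : ℕ),
          Real.log (1 + lam i) := by
  classical
  set Hh : Matrix (Fin d) (Fin d) ℝ :=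
    ∑ i ∈ univ.filter fun i : Fin d => (i : ℕ) < k, lam i • vecMulVec (u i) (u i) with hHhdef
  set R : Matrix (Fin d) (Fin d) ℝ :=
    ∑ i ∈ univ.filter fun i : Fin d => k ≤ (i : ℕ), lam i • vecMulVec (u i) (u i) with hRdef
  have hHR : Hh + R = F * Γ * Fᵀ := by
    rw [h_spec, hHhdef, hRdef,
      ← Finset.sum_filter_add_sum_filter_not univ (fun i : Fin d => (i : ℕ) < k)]
    congr 1
    apply Finset.sum_congr _ fun _ _ => rfl
    ext i; simp [not_lt]
  have hHh : Hh.PosSemidef := aux_psd_sum lam h_nonneg u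
  have hR : R.PosSemidef := aux_psd_sum lam h_nonneg u
  have hWHh : (W * Hh * Wᵀ).PosSemidef := by
    have := hHh.mul_mul_conjTranspose_same W
    rwa [Matrix.conjTranspose_eq_transpose_of_trivial] at this
  have hWR : (W * R * Wᵀ).PosSemidef := by
    have := hR.mul_mul_conjTranspose_same W
    rwa [Matrix.conjTranspose_eq_transpose_of_trivial] at this
  -- Step A: Sylvester
  have hdetA : (1 + Γh * Fᵀ * Wᵀ * W * F * Γh).det
      = (1 + W * Hh * Wᵀ + W * R * Wᵀ).det := by
    have h1 : Γh * Fᵀ * Wᵀ * W * F * Γh = (Γh * Fᵀ * Wᵀ) * (W * F * Γh) := by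
      simp only [Matrix.mul_assoc]
    rw [h1, Matrix.det_one_add_mul_comm]
    have h2 : W * F * Γh * (Γh * Fᵀ * Wᵀ) = W * (F * Γ * Fᵀ) * Wᵀ := by
      rw [hΓsq]; simp only [Matrix.mul_assoc]
    have h3 : (1 : Matrix (Fin r) (Fin r) ℝ) + W * F * Γh * (Γh * Fᵀ * Wᵀ)
        = 1 + W * Hh * Wᵀ + W * R * Wᵀ := by
      rw [h2, ← hHR, Matrix.mul_add, Matrix.add_mul, add_assoc]
    rw [h3]
  -- positivity
  have hsmallpos : 0 < (1 + W * Hh * Wᵀ).det := aux_det_one_add_pos hWHh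
  have hWRpos : 0 < (1 + W * R * Wᵀ).det := aux_det_one_add_pos hWR
  have hbigpos : 0 < (1 + Γh * Fᵀ * Wᵀ * W * F * Γh).det := by
    rw [hdetA]; exact zero_lt_one.trans_le ((aux_one_le_det hWHh).trans (aux_mono hWHh hWR))
  -- lower bound
  have hge : (1 + W * Hh * Wᵀ).det ≤ (1 + Γh * Fᵀ * Wᵀ * W * F * Γh).det := by
    rw [hdetA]; exact aux_mono hWHh hWR
  have hlogge := Real.log_le_log hsmallpos hge
  -- W diagonal structure
  have hWdiag : Wᵀ * W = Matrix.diagonal (fun j => ∑ i, W i j) := by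
    ext a b
    rw [Matrix.mul_apply]
    by_cases hab : a = b
    · subst hab
      simp only [Matrix.diagonal_apply_eq, Matrix.transpose_apply]
      exact Finset.sum_congr rfl fun i _ => by rcases hW01 i a with h | h <;> simp [h]
    · rw [Matrix.diagonal_apply_ne _ hab]
      apply Finset.sum_eq_zero
      intro i _
      rcases hW01 i a with h | h
      · simp [Matrix.transpose_apply, h]
      · rcases hW01 i b with h' | h'
        · simp [h']
        · exfalso
          have hle : W i a + W i b ≤ ∑ l, W i l := by
            have hsub : (∑ l ∈ ({a, b} : Finset (Fin d)), W i l) ≤ ∑ l, W i l :=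
              Finset.sum_le_sum_of_subset_of_nonneg (Finset.subset_univ _)
                (fun l _ _ => by rcases hW01 i l with h0 | h0 <;> simp [h0])
            rwa [Finset.sum_pair hab] at hsub
          rw [hWrow i, h, h'] at hle; norm_num at hle
  have hWq : ((1 : Matrix (Fin d) (Fin d) ℝ) - Wᵀ * W).PosSemidef := by
    rw [hWdiag, ← Matrix.diagonal_one, Matrix.diagonal_sub]
    refine Matrix.posSemidef_diagonal_iff.mpr fun j => ?_
    rcases hWcol j with h | h <;> simp [h]
  -- det (1 + W R Wᵀ) ≤ det (1 + R)
  have hWRdet : (1 + W * R * Wᵀ).det ≤ (1 + R).det := by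
    set S : Matrix (Fin d) (Fin d) ℝ := CFC.sqrt R with hSdef
    have hSpsd : S.PosSemidef := nonneg_iff_posSemidef.mp (CFC.sqrt_nonneg R)
    have hSS : S * S = R := CFC.sqrt_mul_sqrt_self R (nonneg_iff_posSemidef.mpr hR)
    have hSH : Sᴴ = S := hSpsd.1
    have hQ : (Wᵀ * W).PosSemidef := by
      have := Matrix.posSemidef_conjTranspose_mul_self W
      rwa [Matrix.conjTranspose_eq_transpose_of_trivial] at this
    have hX : (S * (Wᵀ * W) * S).PosSemidef := by
      have := hQ.mul_mul_conjTranspose_same S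
      rwa [hSH] at this
    have hE : (S * ((1 : Matrix (Fin d) (Fin d) ℝ) - Wᵀ * W) * S).PosSemidef := by
      have := hWq.mul_mul_conjTranspose_same S
      rwa [hSH] at this
    have h1 : (1 + W * R * Wᵀ).det = (1 + S * (Wᵀ * W) * S).det := by
      rw [← hSS]
      rw [show W * (S * S) * Wᵀ = (W * S) * (S * Wᵀ) by simp only [Matrix.mul_assoc]]
      rw [Matrix.det_one_add_mul_comm]
      congr 2
      simp only [Matrix.mul_assoc]
    have hsum : 1 + S * (Wᵀ * W) * S + S * ((1 : Matrix (Fin d) (Fin d) ℝ) - Wᵀ * W) * S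
        = 1 + S * S := by
      rw [Matrix.mul_sub, Matrix.sub_mul, Matrix.mul_one]
      abel
    calc (1 + W * R * Wᵀ).det = (1 + S * (Wᵀ * W) * S).det := h1
      _ ≤ (1 + S * (Wᵀ * W) * S + S * ((1 : Matrix (Fin d) (Fin d) ℝ) - Wᵀ * W) * S).det :=
          aux_mono hX hE
      _ = (1 + R).det := by rw [hsum, hSS]
  have h1Rpos : 0 < (1 + R).det := aux_det_one_add_pos hR
  -- log det (1 + R) = sum of logs
  set U : Matrix (Fin d) (Fin d) ℝ := Matrix.of u with hUdef
  have hUUt : U * Uᵀ = 1 := by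
    ext i j
    rw [Matrix.mul_apply]
    simp only [Matrix.transpose_apply, hUdef, Matrix.of_apply]
    rw [show (∑ l, u i l * u j l) = u i ⬝ᵥ u j from rfl, h_orth i j]
    simp [Matrix.one_apply]
  have hUtU : Uᵀ * U = 1 := mul_eq_one_comm.mp hUUt
  set D : Fin d → ℝ := fun i => if k ≤ (i : ℕ) then lam i else 0 with hDdef
  have hRD : R = Uᵀ * Matrix.diagonal D * U := by
    ext a b
    rw [Matrix.mul_apply]
    simp only [Matrix.mul_diagonal, Matrix.transpose_apply, hUdef, Matrix.of_apply]
    rw [hRdef]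
    simp only [Matrix.sum_apply, Matrix.smul_apply, Matrix.vecMulVec_apply, smul_eq_mul]
    rw [Finset.sum_filter]
    apply Finset.sum_congr rfl
    intro i _
    by_cases h : k ≤ (i : ℕ) <;> simp [hDdef, h] <;> ring
  have hdet1R : (1 + R).det = ∏ i, (1 + D i) := by
    have hfac : (1 : Matrix (Fin d) (Fin d) ℝ) + R = Uᵀ * (1 + Matrix.diagonal D) * U := by
      rw [Matrix.mul_add, Matrix.add_mul, Matrix.mul_one, hUtU, hRD]
    rw [hfac, Matrix.det_mul, Matrix.det_mul, mul_right_comm,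
      show Uᵀ.det * U.det = 1 by rw [← Matrix.det_mul, hUtU, Matrix.det_one], one_mul,
      show (1 : Matrix (Fin d) (Fin d) ℝ) + Matrix.diagonal D
          = Matrix.diagonal (fun i => 1 + D i) by
        rw [← Matrix.diagonal_one, Matrix.diagonal_add],
      Matrix.det_diagonal]
  have hDnonneg : ∀ i, 0 ≤ D i := by
    intro i; by_cases h : k ≤ (i : ℕ) <;> simp [hDdef, h, h_nonneg i]
  have hlog1R : Real.log (1 + R).det
      = ∑ i ∈ univ.filter fun i : Fin d => k ≤ (i : ℕ), Real.log (1 + lam i) := by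
    rw [hdet1R, Real.log_prod fun i _ => by have := hDnonneg i; positivity]
    rw [Finset.sum_filter]
    apply Finset.sum_congr rfl
    intro i _
    by_cases h : k ≤ (i : ℕ) <;> simp [hDdef, h]
  -- upper bound assembly
  have hup : (1 + Γh * Fᵀ * Wᵀ * W * F * Γh).det
      ≤ (1 + W * Hh * Wᵀ).det * (1 + W * R * Wᵀ).det := by
    rw [hdetA]; exact aux_prod hWHh hWR
  have hlogup : Real.log (1 + Γh * Fᵀ * Wᵀ * W * F * Γh).det
      ≤ Real.log (1 + W * Hh * Wᵀ).det + Real.log (1 + W * R * Wᵀ).det := by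
    have := Real.log_le_log hbigpos hup
    rwa [Real.log_mul hsmallpos.ne' hWRpos.ne'] at this
  have hlogWR : Real.log (1 + W * R * Wᵀ).det ≤ Real.log (1 + R).det :=
    Real.log_le_log hWRpos hWRdet
  constructor
  · linarith [hlogge]
  · rw [← hlog1R] at *
    linarith [hlogup, hlogWR]
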